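/- Let n ≥ 3 be an odd integer and 1 ≤ i ≤ (n−1)/2. The kernel of the ℂ[X,Y]-linear map ℂ[X,Y]^5 → ℂ[X,Y]^2 sending (f₁, f₂, f₃, f₄, f₅) to (f₁·Y^i + f₂·XY + f₅·X^{n−2i}, −f₁·X^i + f₃·XY + f₄·Y^{n−2i}) is the ℂ[X,Y]-submodule generated by the three elements (XY, −Y^i, X^i, 0, 0), (0, 0, −Y^{n−2i−1}, X, 0), and (0, −X^{n−2i−1}, 0, 0, Y). -/

import Mathlib

open MvPolynomial


private lemma primeX0' : Prime (X 0 : MvPolynomial (Fin 2) ℂ) := by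
  rw [← MulEquiv.prime_iff (finSuccEquiv ℂ 1).toMulEquiv]
  show Prime ((finSuccEquiv ℂ 1) (X 0))
  rw [finSuccEquiv_X_zero]
  exact Polynomial.prime_X

private lemma primeX1' : Prime (X 1 : MvPolynomial (Fin 2) ℂ) := by
  rw [← MulEquiv.prime_iff (renameEquiv ℂ (Equiv.swap (0:Fin 2) 1)).toMulEquiv]
  show Prime ((renameEquiv ℂ (Equiv.swap (0:Fin 2) 1)) (X 1))
  rw [renameEquiv_apply, rename_X]
  simpa using primeX0'

private lemma notdvd10 : ¬ ((X 1 : MvPolynomial (Fin 2) ℂ) ∣ X 0) := by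
  intro h
  have h2 := map_dvd (aeval (fun j : Fin 2 => if j = 0 then (1:ℂ) else 0)).toRingHom h
  simp at h2

private lemma notdvd01 : ¬ ((X 0 : MvPolynomial (Fin 2) ℂ) ∣ X 1) := by
  intro h
  have h2 := map_dvd (aeval (fun j : Fin 2 => if j = 0 then (0:ℂ) else 1)).toRingHom h
  simp at h2

/-- Let `n ≥ 3` be odd and `1 ≤ i ≤ (n-1)/2`.  The kernel of the `ℂ[X,Y]`-linear map
`ℂ[X,Y]⁵ → ℂ[X,Y]²`,
`(f₁, f₂, f₃, f₄, f₅) ↦ (f₁·Yⁱ + f₂·XY + f₅·X^{n-2i}, -f₁·Xⁱ + f₃·XY + f₄·Y^{n-2i})`,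
is the `ℂ[X,Y]`-submodule generated by `(XY, -Yⁱ, Xⁱ, 0, 0)`, `(0, 0, -Y^{n-2i-1}, X, 0)`
and `(0, -X^{n-2i-1}, 0, 0, Y)`. -/
theorem stmt_16 (n i : ℕ) (hn : 3 ≤ n) (hodd : Odd n) (hi : 1 ≤ i) (hiC : i ≤ (n - 1) / 2) :
    LinearMap.ker (Matrix.mulVecLin
        (!![X 1 ^ i, X 0 * X 1, 0, 0, X 0 ^ (n - 2 * i);
            -(X 0 ^ i), 0, X 0 * X 1, X 1 ^ (n - 2 * i), 0] :
          Matrix (Fin 2) (Fin 5) (MvPolynomial (Fin 2) ℂ))) =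
      Submodule.span (MvPolynomial (Fin 2) ℂ)
        {![X 0 * X 1, -(X 1 ^ i), X 0 ^ i, 0, 0],
         ![0, 0, -(X 1 ^ (n - 2 * i - 1)), X 0, 0],
         ![0, -(X 0 ^ (n - 2 * i - 1)), 0, 0, X 1]} := by
  have hx : (X 0 : MvPolynomial (Fin 2) ℂ) ≠ 0 := X_ne_zero 0
  have hy : (X 1 : MvPolynomial (Fin 2) ℂ) ≠ 0 := X_ne_zero 1
  obtain ⟨m', hm⟩ : ∃ m', n - 2*i = m' + 1 := ⟨n - 2*i - 1, by omega⟩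
  obtain ⟨i', hii⟩ : ∃ i', i = i' + 1 := ⟨i - 1, by omega⟩
  rw [hm, hii]
  simp only [Nat.add_sub_cancel]
  apply le_antisymm
  · -- ker ≤ span
    intro f hf
    rw [LinearMap.mem_ker, Matrix.mulVecLin_apply] at hf
    have E1 := congrFun hf 0
    have E2 := congrFun hf 1
    simp [Matrix.mulVec, dotProduct, Fin.sum_univ_five] at E1 E2
    -- Step 1 : X 1 ∣ f 4
    obtain ⟨b, hb⟩ : (X 1 : MvPolynomial (Fin 2) ℂ) ∣ f 4 := by
      have hd : (X 1 : MvPolynomial (Fin 2) ℂ) ∣ X 0 ^ (m'+1) * f 4 :=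
        ⟨-(X 1 ^ i' * f 0 + X 0 * f 1), by linear_combination E1⟩
      rcases primeX1'.dvd_or_dvd hd with h | h
      · exact absurd (primeX1'.dvd_of_dvd_pow h) notdvd10
      · exact h
    -- Step 2 : divide E1 by X 1
    have E1' : X 1 ^ i' * f 0 + X 0 * f 1 + X 0 ^ (m'+1) * b = 0 := by
      apply mul_left_cancel₀ hy
      rw [mul_zero]
      linear_combination E1 - X 0 ^ (m'+1) * hb
    -- Step 3 : X 0 ∣ f 0
    obtain ⟨u, hu⟩ : (X 0 : MvPolynomial (Fin 2) ℂ) ∣ f 0 := by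
      have hd : (X 0 : MvPolynomial (Fin 2) ℂ) ∣ X 1 ^ i' * f 0 :=
        ⟨-(f 1 + X 0 ^ m' * b), by linear_combination E1'⟩
      rcases primeX0'.dvd_or_dvd hd with h | h
      · exact absurd (primeX0'.dvd_of_dvd_pow h) notdvd01
      · exact h
    -- Step 4 : X 1 ∣ f 0, hence f 0 = X 0 * (X 1 * e)
    obtain ⟨e, he⟩ : (X 1 : MvPolynomial (Fin 2) ℂ) ∣ u := by
      have hd : (X 1 : MvPolynomial (Fin 2) ℂ) ∣ X 0 ^ (i'+1) * f 0 :=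
        ⟨X 0 * f 2 + X 1 ^ m' * f 3, by linear_combination -E2⟩
      have hd2 : (X 1 : MvPolynomial (Fin 2) ℂ) ∣ X 0 ^ (i'+1) * (X 0 * u) := by rwa [← hu]
      have : (X 1 : MvPolynomial (Fin 2) ℂ) ∣ u := by
        rcases primeX1'.dvd_or_dvd hd2 with h | h
        · exact absurd (primeX1'.dvd_of_dvd_pow h) notdvd10
        · rcases primeX1'.dvd_or_dvd h with h2 | h2
          · exact absurd h2 notdvd10
          · exact h2
      exact this
    have hf0 : f 0 = X 0 * (X 1 * e) := by rw [hu, he]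
    -- Step 5 : X 0 ∣ f 3, f 3 = X 0 * d
    obtain ⟨d, hd3⟩ : (X 0 : MvPolynomial (Fin 2) ℂ) ∣ f 3 := by
      have hd : (X 0 : MvPolynomial (Fin 2) ℂ) ∣ X 1 ^ (m'+1) * f 3 :=
        ⟨X 0 ^ i' * f 0 - X 1 * f 2, by linear_combination E2⟩
      rcases primeX0'.dvd_or_dvd hd with h | h
      · exact absurd (primeX0'.dvd_of_dvd_pow h) notdvd01
      · exact h
    -- cancelled equations
    have hE1 : X 1 ^ (i'+1) * e + f 1 + X 0 ^ m' * b = 0 := by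
      apply mul_left_cancel₀ (mul_ne_zero hx hy)
      rw [mul_zero]
      linear_combination E1 - X 0 ^ (m'+1) * hb - X 1 ^ (i'+1) * hf0
    have hE2 : -(X 0 ^ (i'+1) * e) + f 2 + X 1 ^ m' * d = 0 := by
      apply mul_left_cancel₀ (mul_ne_zero hx hy)
      rw [mul_zero]
      linear_combination E2 - X 1 ^ (m'+1) * hd3 + X 0 ^ (i'+1) * hf0
    -- write f as a combination
    have c0 : f 0 = e * (X 0 * X 1) + d * 0 + b * 0 := by linear_combination hf0
    have c1 : f 1 = e * (-(X 1 ^ (i'+1))) + d * 0 + b * (-(X 0 ^ m')) := by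
      linear_combination hE1
    have c2 : f 2 = e * (X 0 ^ (i'+1)) + d * (-(X 1 ^ m')) + b * 0 := by
      linear_combination hE2
    have c3 : f 3 = e * 0 + d * X 0 + b * 0 := by linear_combination hd3
    have c4 : f 4 = e * 0 + d * 0 + b * X 1 := by linear_combination hb
    have hfeq : f = e • ![X 0 * X 1, -(X 1 ^ (i'+1)), X 0 ^ (i'+1), 0, 0]
        + d • ![0, 0, -(X 1 ^ m'), X 0, 0]
        + b • ![0, -(X 0 ^ m'), 0, 0, X 1] := by
      funext j
      fin_cases j
      · exact c0
      · exact c1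
      · exact c2
      · exact c3
      · exact c4
    rw [hfeq]
    refine Submodule.add_mem _ (Submodule.add_mem _ ?_ ?_) ?_ <;>
      exact Submodule.smul_mem _ _ (Submodule.subset_span (by simp))
  · -- span ≤ ker
    rw [Submodule.span_le]
    rintro v (rfl | rfl | rfl) <;>
    · rw [SetLike.mem_coe, LinearMap.mem_ker, Matrix.mulVecLin_apply]
      have h0 : ∀ g : Fin 5 → MvPolynomial (Fin 2) ℂ, ∀ j : Fin 2,
          (!![X 1 ^ (i'+1), X 0 * X 1, 0, 0, X 0 ^ (m'+1);
            -(X 0 ^ (i'+1)), 0, X 0 * X 1, X 1 ^ (m'+1), 0].mulVec g) j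
          = (if j = 0 then X 1 ^ (i'+1) * g 0 + X 0 * X 1 * g 1 + X 0 ^ (m'+1) * g 4
             else -(X 0 ^ (i'+1) * g 0) + X 0 * X 1 * g 2 + X 1 ^ (m'+1) * g 3) := by
        intro g j
        fin_cases j <;>
          simp [Matrix.mulVec, dotProduct, Fin.sum_univ_five]
      funext j
      rw [h0]
      fin_cases j <;> simp <;> ring
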